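/- Let A = (Q, Σ, δ, ρ) be a reversible Mealy automaton with |Q| ≥ 2 whose dual acts spherically transitively, i.e., every power A^n is connected (for all n ≥ 1 and all u, v ∈ Qⁿ there exists s ∈ Σ* with δ_s(u) = v). Then the semigroup ⟨A⟩⁺ generated by A is torsion-free; in fact for every nonempty word u ∈ Q⁺ the transformations ρ_u, ρ_u², ρ_u³, … of Σ* are pairwise distinct. -/
import Mathlib


/-!
Mealy automata: common definitions.

A Mealy automaton on stateset `Q` and alphabet `Γ` is given by transition
functions `δ : Γ → Q → Q` (for each input letter) and output functions
`ρ : Q → Γ → Γ` (for each state); it has a transition `x —i|j→ y` exactly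
when `δ i x = y` and `ρ x i = j`.
-/

/-- Extended output function `ρ_x : Γ* → Γ*` of a single state. -/
def rhoStar {Q Γ : Type*} (δ : Γ → Q → Q) (ρ : Q → Γ → Γ) : Q → List Γ → List Γ
  | _, [] => []
  | x, i :: s => ρ x i :: rhoStar δ ρ (δ i x) s

/-- `ρ_u : Γ* → Γ*` for a word `u = x₁⋯x_n` of states: `ρ_u = ρ_{x_n} ∘ ⋯ ∘ ρ_{x₁}`. -/
def rhoWord {Q Γ : Type*} (δ : Γ → Q → Q) (ρ : Q → Γ → Γ) : List Q → List Γ → List Γ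
  | [], s => s
  | x :: u, s => rhoWord δ ρ u (rhoStar δ ρ x s)

/-- `ρ_u : Γ → Γ` on single letters (the output function of the power automaton). -/
def rhoLetter {Q Γ : Type*} (ρ : Q → Γ → Γ) : List Q → Γ → Γ
  | [], i => i
  | x :: u, i => rhoLetter ρ u (ρ x i)

/-- Extended transition function `δ_i : Q* → Q*` (the transition function of powers). -/
def deltaStar {Q Γ : Type*} (δ : Γ → Q → Q) (ρ : Q → Γ → Γ) : Γ → List Q → List Q
  | _, [] => []
  | i, x :: u => δ i x :: deltaStar δ ρ (ρ x i) u

/-- Sequential application `δ_s = δ_{s_n} ∘ ⋯ ∘ δ_{s₁}` of the letters of a word `s`. -/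
def applyWord {S Γ : Type*} (d : Γ → S → S) : List Γ → S → S
  | [], x => x
  | i :: s, x => applyWord d s (d i x)

/-- The orbit `{δ_s(x) : s ∈ Γ*}` of a state: for reversible automata this is
exactly the (strongly) connected component of `x`. -/
def orbitOf {S Γ : Type*} (d : Γ → S → S) (x : S) : Set S :=
  {y | ∃ s : List Γ, applyWord d s x = y}

/-- An automaton is invertible when every output function is a permutation. -/
def MInvertible {Q Γ : Type*} (ρ : Q → Γ → Γ) : Prop := ∀ x, Function.Bijective (ρ x)

/-- An automaton is reversible when every transition function is a permutation. -/
def MReversible {Q Γ : Type*} (δ : Γ → Q → Q) : Prop := ∀ i, Function.Bijective (δ i)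

/-- Coreversibility: `δ_i(y) = δ_{i'}(z)` and `ρ_y(i) = ρ_z(i')` imply `y = z`. -/
def MCoreversible {Q Γ : Type*} (δ : Γ → Q → Q) (ρ : Q → Γ → Γ) : Prop :=
  ∀ y z : Q, ∀ i i' : Γ, δ i y = δ i' z → ρ y i = ρ z i' → y = z

/-- Bireversible: invertible, reversible and coreversible. -/
def MBireversible {Q Γ : Type*} (δ : Γ → Q → Q) (ρ : Q → Γ → Γ) : Prop :=
  MInvertible ρ ∧ MReversible δ ∧ MCoreversible δ ρ

/-- Connectedness: every state is reachable from every state. -/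
def MConnected {Q Γ : Type*} (δ : Γ → Q → Q) : Prop :=
  ∀ x y : Q, ∃ s : List Γ, applyWord δ s x = y

/-- Invertibility of a component `C` (as an automaton with stateset `C`). -/
def CompInvertible {S Γ : Type*} (r : S → Γ → Γ) (C : Set S) : Prop :=
  ∀ x ∈ C, Function.Bijective (r x)

/-- Reversibility of a component `C`: each transition function permutes `C`. -/
def CompReversible {S Γ : Type*} (d : Γ → S → S) (C : Set S) : Prop :=
  ∀ i : Γ, Set.BijOn (d i) C C

/-- Coreversibility of a component `C` (as an automaton with stateset `C`). -/
def CompCoreversible {S Γ : Type*} (d : Γ → S → S) (r : S → Γ → Γ) (C : Set S) : Prop :=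
  ∀ y ∈ C, ∀ z ∈ C, ∀ i i' : Γ, d i y = d i' z → r y i = r z i' → y = z

/-- Bireversibility of a component `C` (as an automaton with stateset `C`). -/
def CompBireversible {S Γ : Type*} (d : Γ → S → S) (r : S → Γ → Γ) (C : Set S) : Prop :=
  CompInvertible r C ∧ CompReversible d C ∧ CompCoreversible d r C

/-- Transition functions of the product `A × B` of two Mealy automata. -/
def prodD {Q Q' Γ : Type*} (δ : Γ → Q → Q) (ρ : Q → Γ → Γ) (δ' : Γ → Q' → Q') :
    Γ → Q × Q' → Q × Q' :=
  fun i p => (δ i p.1, δ' (ρ p.1 i) p.2)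

/-- Output functions of the product `A × B` of two Mealy automata. -/
def prodR {Q Q' Γ : Type*} (ρ : Q → Γ → Γ) (ρ' : Q' → Γ → Γ) : Q × Q' → Γ → Γ :=
  fun p i => ρ' p.2 (ρ p.1 i)

/-- `u^n`: the `n`-fold concatenation of a word with itself. -/
def wordPow {Q : Type*} (u : List Q) : ℕ → List Q
  | 0 => []
  | n + 1 => u ++ wordPow u n

section AuxMealy

variable {Q Γ : Type*} (δ : Γ → Q → Q) (ρ : Q → Γ → Γ)

theorem rhoStar_nil' (x : Q) : rhoStar δ ρ x ([] : List Γ) = [] := rfl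

theorem rhoStar_length : ∀ (s : List Γ) (x : Q), (rhoStar δ ρ x s).length = s.length
  | [], _ => rfl
  | i :: s, x => by simp [rhoStar, rhoStar_length s]

theorem rhoWord_length : ∀ (z : List Q) (s : List Γ), (rhoWord δ ρ z s).length = s.length
  | [], _ => rfl
  | x :: z, s => by rw [rhoWord, rhoWord_length z, rhoStar_length]

theorem deltaStar_length : ∀ (z : List Q) (i : Γ), (deltaStar δ ρ i z).length = z.length
  | [], _ => rfl
  | x :: z, i => by simp [deltaStar, deltaStar_length z]

theorem applyWord_deltaStar_length :
    ∀ (s : List Γ) (z : List Q), (applyWord (deltaStar δ ρ) s z).length = z.length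
  | [], _ => rfl
  | i :: s, z => by
      rw [applyWord, applyWord_deltaStar_length s, deltaStar_length]

theorem rhoWord_append : ∀ (a b : List Q) (s : List Γ),
    rhoWord δ ρ (a ++ b) s = rhoWord δ ρ b (rhoWord δ ρ a s)
  | [], _, _ => rfl
  | x :: a, b, s => by
      rw [List.cons_append, rhoWord, rhoWord, rhoWord_append a]

theorem wordPow_add (u : List Q) (m n : ℕ) :
    wordPow u (m + n) = wordPow u m ++ wordPow u n := by
  induction m with
  | zero => simp [wordPow]
  | succ m ih => rw [Nat.succ_add, wordPow, wordPow, ih, List.append_assoc]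

theorem wordPow_length (u : List Q) : ∀ k : ℕ, (wordPow u k).length = k * u.length
  | 0 => by simp [wordPow]
  | k + 1 => by simp [wordPow, wordPow_length u k]; ring

theorem rhoWord_wordPow (u : List Q) : ∀ (k : ℕ) (s : List Γ),
    rhoWord δ ρ (wordPow u k) s = (rhoWord δ ρ u)^[k] s
  | 0, s => rfl
  | k + 1, s => by
      rw [wordPow, rhoWord_append, rhoWord_wordPow u k, Function.iterate_succ_apply]

theorem rhoWord_cons : ∀ (z : List Q) (i : Γ) (t : List Γ),
    rhoWord δ ρ z (i :: t) = rhoLetter ρ z i :: rhoWord δ ρ (deltaStar δ ρ i z) t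
  | [], _, _ => rfl
  | x :: z, i, t => by
      rw [rhoWord, rhoStar, rhoWord_cons z, deltaStar, rhoWord]
      rfl

theorem rhoWord_nil : ∀ z : List Q, rhoWord δ ρ z ([] : List Γ) = []
  | [] => rfl
  | x :: z => by rw [rhoWord, rhoStar_nil', rhoWord_nil z]

theorem rhoWord_singleton (z : List Q) (i : Γ) :
    rhoWord δ ρ z [i] = [rhoLetter ρ z i] := by
  rw [rhoWord_cons, rhoWord_nil]

theorem deltaStar_append : ∀ (a b : List Q) (i : Γ),
    deltaStar δ ρ i (a ++ b) = deltaStar δ ρ i a ++ deltaStar δ ρ (rhoLetter ρ a i) b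
  | [], _, _ => rfl
  | x :: a, b, i => by
      simp only [List.cons_append, deltaStar, rhoLetter, List.append_eq, deltaStar_append a]

theorem rho_transfer : ∀ (s : List Γ) (z w : List Q),
    (∀ t, rhoWord δ ρ z t = rhoWord δ ρ w t) →
    ∀ t, rhoWord δ ρ (applyWord (deltaStar δ ρ) s z) t
        = rhoWord δ ρ (applyWord (deltaStar δ ρ) s w) t
  | [], z, w, h, t => h t
  | i :: s, z, w, h, t => by
      refine rho_transfer s _ _ (fun t' => ?_) t
      have h2 := h (i :: t')
      rw [rhoWord_cons, rhoWord_cons] at h2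
      exact (List.cons.injEq _ _ _ _ ▸ h2).2

theorem applyWord_append_ex (s : List Γ) : ∀ a b : List Q,
    ∃ b', applyWord (deltaStar δ ρ) s (a ++ b) = applyWord (deltaStar δ ρ) s a ++ b' ∧
      b'.length = b.length := by
  induction s with
  | nil => exact fun a b => ⟨b, rfl, rfl⟩
  | cons i s ih =>
      intro a b
      rw [applyWord, applyWord, deltaStar_append]
      obtain ⟨b', h1, h2⟩ := ih (deltaStar δ ρ i a) (deltaStar δ ρ (rhoLetter ρ a i) b)
      exact ⟨b', h1, h2.trans (deltaStar_length δ ρ b _)⟩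

theorem iter_shift {α : Type*} (f : α → α) (a d : ℕ) (h : f^[a] = f^[a + d]) :
    ∀ m t, f^[a + m + t * d] = f^[a + m] := by
  intro m t
  induction t with
  | zero => simp
  | succ t ih =>
      have e1 : a + m + (t + 1) * d = d + (a + m + t * d) := by ring
      rw [e1, Function.iterate_add, ih]
      have e2 : d + (a + m) = m + (a + d) := by ring
      rw [← Function.iterate_add, e2, Function.iterate_add, ← h, ← Function.iterate_add,
        Nat.add_comm m a]

theorem mealy_helper_false {Q Γ : Type*} [Fintype Q]
    (δ : Γ → Q → Q) (ρ : Q → Γ → Γ) (hcard : 2 ≤ Fintype.card Q)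
    (hsph : ∀ n : ℕ, 1 ≤ n → ∀ u v : List Q, u.length = n → v.length = n →
      ∃ s : List Γ, applyWord (deltaStar δ ρ) s u = v)
    (u : List Q) (hu : u ≠ []) (p q : ℕ) (hlt : p < q)
    (hpq : (rhoWord δ ρ u)^[p + 1] = (rhoWord δ ρ u)^[q + 1]) : False := by
  set f := rhoWord δ ρ u with hf
  have hl : 1 ≤ u.length := List.length_pos_iff.mpr hu
  set k := (p + 1) * (q - p) with hkdef
  have hk1 : p + 1 ≤ k := Nat.le_mul_of_pos_right _ (by omega)
  -- iterate equality  f^[k] = f^[2k]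
  have hshift := iter_shift f (p + 1) (q - p)
    (by
      have e : p + 1 + (q - p) = q + 1 := by omega
      rw [e]; exact hpq)
    (k - (p + 1)) (p + 1)
  have e3 : p + 1 + (k - (p + 1)) + (p + 1) * (q - p) = 2 * k := by omega
  have e4 : p + 1 + (k - (p + 1)) = k := by omega
  rw [e3, e4] at hshift
  set N := k * u.length with hNdef
  have hN1 : 1 ≤ N := by
    have : 1 * 1 ≤ k * u.length := Nat.mul_le_mul (by omega) hl
    omega
  set U := wordPow u k with hUdef
  have hU : U.length = N := wordPow_length u k
  have hUU : wordPow u (2 * k) = U ++ U := by rw [two_mul, wordPow_add]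
  -- key absorption property
  have star : ∀ a b : List Q, a.length = N → b.length = N →
      ∀ t, rhoWord δ ρ b (rhoWord δ ρ a t) = rhoWord δ ρ a t := by
    intro a b ha hb t
    obtain ⟨s, hs⟩ := hsph (2 * N) (by omega) (U ++ U) (a ++ b)
      (by rw [List.length_append, hU]; ring)
      (by rw [List.length_append, ha, hb]; ring)
    obtain ⟨b', h1, h2⟩ := applyWord_append_ex δ ρ s U U
    rw [h1] at hs
    have hlen : (applyWord (deltaStar δ ρ) s U).length = a.length := by
      rw [applyWord_deltaStar_length, hU, ha]
    obtain ⟨ha', hb'⟩ := List.append_inj hs hlen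
    have hrho := rho_transfer δ ρ s (U ++ U) U
      (by
        intro t'
        rw [← hUU, hUdef, rhoWord_wordPow, rhoWord_wordPow, ← hf, hshift]) t
    rw [h1, ha', hb'] at hrho
    calc rhoWord δ ρ b (rhoWord δ ρ a t) = rhoWord δ ρ (a ++ b) t := (rhoWord_append δ ρ a b t).symm
      _ = rhoWord δ ρ a t := hrho
  -- letter-level version
  have star1 : ∀ a b : List Q, a.length = N → b.length = N →
      ∀ i : Γ, rhoLetter ρ b (rhoLetter ρ a i) = rhoLetter ρ a i := by
    intro a b ha hb i
    have h := star a b ha hb [i]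
    simp only [rhoWord_singleton] at h
    simpa using h
  -- the last two blocks of length N stay equal under the dual action
  have sym : ∀ (s : List Γ) (a b : List Q), a.length = N → b.length = N →
      ∃ a' b', a'.length = N ∧ b'.length = N ∧
        applyWord (deltaStar δ ρ) s (a ++ (b ++ b)) = a' ++ (b' ++ b') := by
    intro s
    induction s with
    | nil => exact fun a b ha hb => ⟨a, b, ha, hb, rfl⟩
    | cons i s ih =>
        intro a b ha hb
        rw [applyWord, deltaStar_append, deltaStar_append, star1 a b ha hb i]
        exact ih _ _ (by rw [deltaStar_length, ha]) (by rw [deltaStar_length, hb])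
  -- contradiction with spherical transitivity at level 3N
  obtain ⟨x, y, hxy⟩ := (Fintype.one_lt_card_iff (α := Q)).mp (by omega)
  obtain ⟨M, hM⟩ : ∃ M, N = M + 1 := ⟨N - 1, by omega⟩
  set A := List.replicate N x with hAdef
  set C := y :: List.replicate M x with hCdef
  have hA : A.length = N := by simp [hAdef]
  have hC : C.length = N := by rw [hCdef, List.length_cons, List.length_replicate]; omega
  obtain ⟨s, hs⟩ := hsph (3 * N) (by omega) (A ++ (A ++ A)) (A ++ (A ++ C))
    (by rw [List.length_append, List.length_append, hA]; ring)
    (by rw [List.length_append, List.length_append, hA, hC]; ring)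
  obtain ⟨a', b', ha', hb', heq⟩ := sym s A A hA hA
  rw [heq] at hs
  obtain ⟨h1, h2⟩ := List.append_inj hs (by rw [ha', hA])
  obtain ⟨h3, h4⟩ := List.append_inj h2 (by rw [hb', hA])
  have hAC : A = C := h3 ▸ h4
  rw [hAdef, hCdef, hM, List.replicate_succ] at hAC
  exact hxy (List.cons.injEq _ _ _ _ ▸ hAC).1

end AuxMealy

/-- A reversible Mealy automaton with at least two states
whose dual acts spherically transitively (all powers are connected)
generates a torsion-free semigroup: for every nonempty word `u` of states,
the positive powers of `ρ_u` are pairwise distinct. -/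
theorem torsionFree_of_spherically_transitive_dual
    {Q Γ : Type*} [Fintype Q] [Fintype Γ] [Nonempty Q] [Nonempty Γ]
    (δ : Γ → Q → Q) (ρ : Q → Γ → Γ)
    (hRev : MReversible δ) (hcard : 2 ≤ Fintype.card Q)
    (hsph : ∀ n : ℕ, 1 ≤ n → ∀ u v : List Q, u.length = n → v.length = n →
      ∃ s : List Γ, applyWord (deltaStar δ ρ) s u = v) :
    ∀ u : List Q, u ≠ [] → ∀ p q : ℕ,
      (rhoWord δ ρ u)^[p + 1] = (rhoWord δ ρ u)^[q + 1] → p = q := by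
  intro u hu p q hpq
  by_contra hne
  rcases Nat.lt_or_ge p q with hlt | hge
  · exact mealy_helper_false δ ρ hcard hsph u hu p q hlt hpq
  · exact mealy_helper_false δ ρ hcard hsph u hu q p (by omega) hpq.symm
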